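/- On the set of sequences g = (g_i) of unit vectors (g_i ∈ H_i, ‖g_i‖ = 1), both the strong equivalence relation ≡ˢ and the weak equivalence relation ≡ʷ are equivalence relations: each is reflexive, symmetric, and transitive. In particular, if ∑_i |1 − ⟨g_i,h_i⟩_i| < ∞ and ∑_i |1 − ⟨h_i,k_i⟩_i| < ∞ for unit-vector sequences g, h, k, then ∑_i |1 − ⟨g_i,k_i⟩_i| < ∞, and likewise with |1 − |⟨·,·⟩|| in place of |1 − ⟨·,·⟩|. -/

import Mathlib

section Aux

variable {E : Type*} [NormedAddCommGroup E] [InnerProductSpace ℂ E]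

private lemma strong_key' (g h k : E) (hg : ‖g‖ = 1) (hh : ‖h‖ = 1) (hk : ‖k‖ = 1) :
    ‖1 - (inner ℂ g k : ℂ)‖ ≤ 2 * ‖1 - (inner ℂ g h : ℂ)‖ + 2 * ‖1 - (inner ℂ h k : ℂ)‖ := by
  have h1 : (inner ℂ h h : ℂ) = 1 := by rw [inner_self_eq_norm_sq_to_K, hh]; norm_num
  have hid : (1 : ℂ) - inner ℂ g k =
      -(inner ℂ (g-h) (k-h) : ℂ) + (1 - (inner ℂ g h : ℂ)) + (1 - (inner ℂ h k : ℂ)) := by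
    simp [inner_sub_left, inner_sub_right, h1, hh]; ring
  have hb1 : ‖g - h‖^2 ≤ 2 * ‖1 - (inner ℂ g h : ℂ)‖ := by
    have := @norm_sub_sq ℂ E _ _ _ g h
    have h2 : (RCLike.re (1 - (inner ℂ g h : ℂ)) : ℝ) ≤ ‖1 - (inner ℂ g h : ℂ)‖ := RCLike.re_le_norm _
    simp only [map_sub, RCLike.one_re] at h2
    nlinarith [this, hg, hh]
  have hb2 : ‖k - h‖^2 ≤ 2 * ‖1 - (inner ℂ h k : ℂ)‖ := by
    have := @norm_sub_sq ℂ E _ _ _ k h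
    have h2 : (RCLike.re (1 - (inner ℂ h k : ℂ)) : ℝ) ≤ ‖1 - (inner ℂ h k : ℂ)‖ := RCLike.re_le_norm _
    have h3 : RCLike.re (inner ℂ k h : ℂ) = RCLike.re (inner ℂ h k : ℂ) := by
      rw [← inner_conj_symm h k, RCLike.conj_re]
    simp only [map_sub, RCLike.one_re] at h2
    nlinarith [this, hk, hh, h3]
  have hcs : ‖(inner ℂ (g-h) (k-h) : ℂ)‖ ≤ ‖g - h‖ * ‖k - h‖ := norm_inner_le_norm _ _
  calc ‖1 - (inner ℂ g k : ℂ)‖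
      ≤ ‖(inner ℂ (g-h) (k-h) : ℂ)‖ + ‖1 - (inner ℂ g h : ℂ)‖ + ‖1 - (inner ℂ h k : ℂ)‖ := by
        rw [hid]
        refine (norm_add_le _ _).trans ?_
        gcongr
        exact (norm_add_le _ _).trans (by rw [norm_neg])
    _ ≤ 2 * ‖1 - (inner ℂ g h : ℂ)‖ + 2 * ‖1 - (inner ℂ h k : ℂ)‖ := by
        nlinarith [hcs, hb1, hb2, sq_nonneg (‖g-h‖ - ‖k-h‖)]

private lemma conj_div_norm_mul' (a : ℂ) (h0 : a ≠ 0) :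
    (starRingEnd ℂ) (a / ‖a‖) * a = (‖a‖ : ℂ) := by
  have hn : (‖a‖ : ℂ) ≠ 0 := by simpa using norm_ne_zero_iff.mpr h0
  rw [map_div₀, Complex.conj_ofReal]
  field_simp
  rw [Complex.conj_mul']

private lemma norm_one_sub_real' (r : ℝ) : ‖(1 : ℂ) - (r : ℂ)‖ = |1 - r| := by
  rw [show (1 : ℂ) - (r : ℂ) = ((1 - r : ℝ) : ℂ) by push_cast; ring, Complex.norm_real]
  rfl

private lemma weak_key' (g h k : E) (hg : ‖g‖ = 1) (hh : ‖h‖ = 1) (hk : ‖k‖ = 1) :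
    |1 - ‖(inner ℂ g k : ℂ)‖| ≤ 2 * |1 - ‖(inner ℂ g h : ℂ)‖| + 2 * |1 - ‖(inner ℂ h k : ℂ)‖| := by
  set a : ℂ := inner ℂ g h with ha
  set b : ℂ := inner ℂ h k with hb
  set u : ℂ := if a = 0 then 1 else a / ‖a‖ with hu
  set v : ℂ := if b = 0 then 1 else (starRingEnd ℂ) (b / ‖b‖) with hv
  have hu1 : ‖u‖ = 1 := by
    rw [hu]; split_ifs with h0
    · simp
    · rw [norm_div]; rw [Complex.norm_real, Real.norm_eq_abs, abs_norm, div_self (norm_ne_zero_iff.mpr h0)]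
  have hv1 : ‖v‖ = 1 := by
    rw [hv]; split_ifs with h0
    · simp
    · rw [RCLike.norm_conj, norm_div]; rw [Complex.norm_real, Real.norm_eq_abs, abs_norm, div_self (norm_ne_zero_iff.mpr h0)]
  have hg' : ‖u • g‖ = 1 := by rw [norm_smul, hu1, hg, one_mul]
  have hk' : ‖v • k‖ = 1 := by rw [norm_smul, hv1, hk, one_mul]
  have e1 : (inner ℂ (u • g) h : ℂ) = (‖a‖ : ℂ) := by
    rw [inner_smul_left, ← ha, hu]
    split_ifs with h0
    · simp [h0]
    · exact conj_div_norm_mul' a h0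
  have e2 : (inner ℂ h (v • k) : ℂ) = (‖b‖ : ℂ) := by
    rw [inner_smul_right, ← hb, hv]
    split_ifs with h0
    · simp [h0]
    · exact conj_div_norm_mul' b h0
  have e3 : ‖(inner ℂ (u • g) (v • k) : ℂ)‖ = ‖(inner ℂ g k : ℂ)‖ := by
    rw [inner_smul_left, inner_smul_right, norm_mul, norm_mul, RCLike.norm_conj, hu1, hv1]
    ring
  calc |1 - ‖(inner ℂ g k : ℂ)‖|
      = |‖(1:ℂ)‖ - ‖(inner ℂ (u • g) (v • k) : ℂ)‖| := by rw [e3, norm_one]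
    _ ≤ ‖1 - (inner ℂ (u • g) (v • k) : ℂ)‖ := abs_norm_sub_norm_le _ _
    _ ≤ 2 * ‖1 - (inner ℂ (u • g) h : ℂ)‖ + 2 * ‖1 - (inner ℂ h (v • k) : ℂ)‖ :=
        strong_key' _ _ _ hg' hh hk'
    _ = 2 * |1 - ‖a‖| + 2 * |1 - ‖b‖| := by rw [e1, e2, norm_one_sub_real', norm_one_sub_real']

end Aux

/-- **Strong and weak equivalence are equivalence relations.**
On the set of sequences of unit vectors in complex Hilbert spaces `Hᵢ`, both
the strong equivalence `g ≡ˢ h ↔ ∑ᵢ ‖1 - ⟨gᵢ,hᵢ⟩‖ < ∞` and the weak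
equivalence `g ≡ʷ h ↔ ∑ᵢ |1 - |⟨gᵢ,hᵢ⟩|| < ∞` are reflexive, symmetric and
transitive. -/
theorem strong_and_weak_equivalence_are_equivalence_relations
    {H : ℕ → Type*} [∀ i, NormedAddCommGroup (H i)] [∀ i, InnerProductSpace ℂ (H i)] :
    -- reflexivity
    (∀ g : ∀ i, H i, (∀ i, ‖g i‖ = 1) →
      Summable (fun i => ‖1 - (inner ℂ (g i) (g i) : ℂ)‖) ∧
      Summable (fun i => |1 - ‖(inner ℂ (g i) (g i) : ℂ)‖|)) ∧
    -- symmetry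
    (∀ g h : ∀ i, H i, (∀ i, ‖g i‖ = 1) → (∀ i, ‖h i‖ = 1) →
      (Summable (fun i => ‖1 - (inner ℂ (g i) (h i) : ℂ)‖) →
        Summable (fun i => ‖1 - (inner ℂ (h i) (g i) : ℂ)‖)) ∧
      (Summable (fun i => |1 - ‖(inner ℂ (g i) (h i) : ℂ)‖|) →
        Summable (fun i => |1 - ‖(inner ℂ (h i) (g i) : ℂ)‖|))) ∧
    -- transitivity
    (∀ g h k : ∀ i, H i, (∀ i, ‖g i‖ = 1) → (∀ i, ‖h i‖ = 1) → (∀ i, ‖k i‖ = 1) →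
      (Summable (fun i => ‖1 - (inner ℂ (g i) (h i) : ℂ)‖) →
        Summable (fun i => ‖1 - (inner ℂ (h i) (k i) : ℂ)‖) →
        Summable (fun i => ‖1 - (inner ℂ (g i) (k i) : ℂ)‖)) ∧
      (Summable (fun i => |1 - ‖(inner ℂ (g i) (h i) : ℂ)‖|) →
        Summable (fun i => |1 - ‖(inner ℂ (h i) (k i) : ℂ)‖|) →
        Summable (fun i => |1 - ‖(inner ℂ (g i) (k i) : ℂ)‖|))) := by
  refine ⟨?_, ?_, ?_⟩
  · -- reflexivity
    intro g hg
    have h1 : ∀ i, (inner ℂ (g i) (g i) : ℂ) = 1 := fun i => by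
      rw [inner_self_eq_norm_sq_to_K, hg i]; norm_num
    constructor
    · simpa [h1, hg] using (summable_zero : Summable (fun _ : ℕ => (0:ℝ)))
    · simpa [h1, hg] using (summable_zero : Summable (fun _ : ℕ => (0:ℝ)))
  · -- symmetry
    intro g h hg hh
    have e1 : ∀ i, ‖1 - (inner ℂ (h i) (g i) : ℂ)‖ = ‖1 - (inner ℂ (g i) (h i) : ℂ)‖ := fun i => by
      have : (1 : ℂ) - (inner ℂ (h i) (g i) : ℂ)
          = (starRingEnd ℂ) (1 - (inner ℂ (g i) (h i) : ℂ)) := by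
        rw [map_sub, map_one, inner_conj_symm]
      rw [this, RCLike.norm_conj]
    have e2 : ∀ i, ‖(inner ℂ (h i) (g i) : ℂ)‖ = ‖(inner ℂ (g i) (h i) : ℂ)‖ := fun i =>
      norm_inner_symm _ _
    constructor
    · intro hs; simpa [e1] using hs
    · intro hs; simpa [e2] using hs
  · -- transitivity
    intro g h k hg hh hk
    constructor
    · intro h1 h2
      refine Summable.of_nonneg_of_le (fun i => norm_nonneg _)
        (fun i => strong_key' (g i) (h i) (k i) (hg i) (hh i) (hk i))
        ((h1.mul_left 2).add (h2.mul_left 2))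
    · intro h1 h2
      refine Summable.of_nonneg_of_le (fun i => abs_nonneg _)
        (fun i => weak_key' (g i) (h i) (k i) (hg i) (hh i) (hk i))
        ((h1.mul_left 2).add (h2.mul_left 2))
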